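/- For every real number t ≥ 0 and every real p ≥ 2, the integral I¹_p(t) = ∫₀² (1/(1 + η log(t+2)))^{p/2} dη satisfies: if p = 2 then I¹_p(t) ≤ C (log(2+t))^{-1} log(1 + log(t+2)), and if p > 2 then I¹_p(t) ≤ C (log(2+t))^{-1}, for a constant C depending only on p. -/

import Mathlib

open Real intervalIntegral

lemma aux_pos {L : ℝ} (hL : 0 < L) {x : ℝ} (hx : x ∈ Set.uIcc (0:ℝ) 2) :
    0 < 1 + x * L := by
  rw [Set.uIcc_of_le (by norm_num)] at hx
  nlinarith [hx.1]

lemma key1 {L : ℝ} (hL : 0 < L) :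
    (∫ η in (0:ℝ)..2, 1 / (1 + η * L)) = Real.log (1 + 2 * L) / L := by
  have h := intervalIntegral.integral_eq_sub_of_hasDerivAt
    (f := fun x => Real.log (1 + x * L) / L)
    (f' := fun x => 1 / (1 + x * L)) (a := 0) (b := 2)
    (fun x hx => by
      have hpos := aux_pos hL hx
      have h1 : HasDerivAt (fun x : ℝ => 1 + x * L) L x := by
        simpa using ((hasDerivAt_id x).mul_const L).const_add 1
      have h2 := (Real.hasDerivAt_log (ne_of_gt hpos)).comp x h1
      have h3 := h2.div_const L
      refine h3.congr_deriv ?_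
      field_simp)
    (by
      apply ContinuousOn.intervalIntegrable
      apply ContinuousOn.div continuousOn_const
      · exact (continuous_const.add (continuous_id.mul continuous_const)).continuousOn
      · exact fun x hx => ne_of_gt (aux_pos hL hx))
  rw [h]
  simp

lemma key2 {q L : ℝ} (hq : 1 < q) (hL : 0 < L) :
    (∫ η in (0:ℝ)..2, (1 + η * L) ^ (-q)) ≤ 1 / ((q - 1) * L) := by
  have hq1 : (1 : ℝ) - q ≠ 0 := by linarith
  have h := intervalIntegral.integral_eq_sub_of_hasDerivAt
    (f := fun x => (1 + x * L) ^ (1 - q) / ((1 - q) * L))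
    (f' := fun x => (1 + x * L) ^ (-q)) (a := 0) (b := 2)
    (fun x hx => by
      have hpos := aux_pos hL hx
      have h1 : HasDerivAt (fun x : ℝ => 1 + x * L) L x := by
        simpa using ((hasDerivAt_id x).mul_const L).const_add 1
      have h2 := (Real.hasDerivAt_rpow_const (p := 1 - q)
        (Or.inl (ne_of_gt hpos))).comp x h1
      have h3 := h2.div_const ((1 - q) * L)
      refine h3.congr_deriv ?_
      rw [show (1 : ℝ) - q - 1 = -q by ring]
      field_simp)
    (by
      apply ContinuousOn.intervalIntegrable
      apply ContinuousOn.rpow_const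
      · exact (continuous_const.add (continuous_id.mul continuous_const)).continuousOn
      · exact fun x hx => Or.inl (ne_of_gt (aux_pos hL hx)))
  have hA : (0:ℝ) ≤ (1 + 2 * L) ^ (1 - q) := Real.rpow_nonneg (by nlinarith) _
  have h0 : ((1:ℝ) + 0 * L) ^ (1 - q) = 1 := by norm_num
  rw [h0] at h
  rw [h]
  have hD : 0 < (q - 1) * L := mul_pos (by linarith) hL
  have heq : (1 + 2 * L) ^ (1 - q) / ((1 - q) * L) - 1 / ((1 - q) * L)
      = (1 - (1 + 2 * L) ^ (1 - q)) / ((q - 1) * L) := by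
    have : q - 1 ≠ 0 := by linarith
    field_simp
    ring
  rw [heq]
  exact (div_le_div_iff_of_pos_right hD).mpr (by linarith)

theorem stmt_13 (p : ℝ) (hp : 2 ≤ p) :
    ∃ C > 0, ∀ t : ℝ, 0 ≤ t →
      (p = 2 → (∫ η in (0:ℝ)..2, (1 / (1 + η * Real.log (t + 2))) ^ (p / 2))
          ≤ C * (Real.log (2 + t))⁻¹ * Real.log (1 + Real.log (t + 2))) ∧
      (2 < p → (∫ η in (0:ℝ)..2, (1 / (1 + η * Real.log (t + 2))) ^ (p / 2))
          ≤ C * (Real.log (2 + t))⁻¹) := by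
  have hCnn : (0:ℝ) ≤ 2 / (p - 2) := by
    apply div_nonneg <;> linarith
  refine ⟨2 + 2 / (p - 2), by linarith, fun t ht => ?_⟩
  have hL : 0 < Real.log (t + 2) := Real.log_pos (by linarith)
  set L := Real.log (t + 2) with hLdef
  have h2t : Real.log (2 + t) = L := by rw [hLdef, add_comm]
  rw [h2t]
  constructor
  · rintro rfl
    have hint : (∫ η in (0:ℝ)..2, (1 / (1 + η * L)) ^ ((2:ℝ) / 2))
        = ∫ η in (0:ℝ)..2, 1 / (1 + η * L) := by
      apply intervalIntegral.integral_congr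
      intro x hx
      norm_num
    rw [hint, key1 hL]
    have hlog : Real.log (1 + 2 * L) ≤ 2 * Real.log (1 + L) := by
      calc Real.log (1 + 2 * L) ≤ Real.log ((1 + L) ^ 2) :=
            Real.log_le_log (by nlinarith) (by nlinarith)
        _ = 2 * Real.log (1 + L) := by
            rw [Real.log_pow]; norm_num
    have hC2 : (2:ℝ) + 2 / (2 - 2) = 2 := by norm_num
    rw [hC2]
    calc Real.log (1 + 2 * L) / L ≤ (2 * Real.log (1 + L)) / L :=
          (div_le_div_iff_of_pos_right hL).mpr hlog
      _ = 2 * L⁻¹ * Real.log (1 + L) := by ring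
  · intro hp2
    have hq : 1 < p / 2 := by linarith
    have hcong : Set.EqOn (fun η : ℝ => (1 / (1 + η * L)) ^ (p / 2))
        (fun η : ℝ => (1 + η * L) ^ (-(p / 2))) (Set.uIcc (0:ℝ) 2) := by
      intro x hx
      have hpos := aux_pos hL hx
      simp only
      rw [one_div, Real.inv_rpow hpos.le, ← Real.rpow_neg hpos.le]
    rw [intervalIntegral.integral_congr hcong]
    have h1 := key2 hq hL
    have heq : 1 / ((p / 2 - 1) * L) = (2 / (p - 2)) * L⁻¹ := by
      have : p - 2 ≠ 0 := by linarith
      field_simp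
    calc (∫ η in (0:ℝ)..2, (1 + η * L) ^ (-(p / 2))) ≤ 1 / ((p / 2 - 1) * L) := h1
      _ = (2 / (p - 2)) * L⁻¹ := heq
      _ ≤ (2 + 2 / (p - 2)) * L⁻¹ := by
          apply mul_le_mul_of_nonneg_right (by linarith) (inv_nonneg.mpr hL.le)
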